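/- arXiv:1806.10916 — 4 statements merged into one kernel-verified Lean document; each statement's English description precedes it below -/
import Mathlib

section
/- Let F : ℝⁿ → ℝⁿ be C¹ with ‖F(z)‖ and ‖dF(z)‖ uniformly bounded, let φᵗ be its flow, and let C ⊆ ℝⁿ be an open set positively invariant under φᵗ. If the linearized system ẏ = dF(φᵗ(x))·y along every trajectory starting in C is linearly C-positive stable, i.e. there exists λ > 0 such that for all x ∈ C, z ∈ ℝⁿ and t ≥ 0 one has ‖Ψₓᵗ(z)‖ ≤ λ‖z‖ where Ψₓᵗ is the flow of the linearized system, then the nonlinear system is C-positive stable: for all x, y ∈ C with the segment [x,y] contained in C and all t ≥ 0, ‖φᵗ(x) − φᵗ(y)‖ ≤ λ‖x − y‖. -/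
set_option maxHeartbeats 2000000 in
/-- If the linearized system along every trajectory starting in the
positively invariant open set `C` is linearly `C`-positive stable with constant `λ`,
then the nonlinear system is `C`-positive stable with the same constant. -/
theorem stmt_0 (n : ℕ) (F : (Fin n → ℝ) → (Fin n → ℝ)) (r : ℝ)
    (hF : ContDiff ℝ 1 F)
    (hFb : ∀ z, ‖F z‖ ≤ r) (hdFb : ∀ z, ‖fderiv ℝ F z‖ ≤ r)
    (φ : ℝ → (Fin n → ℝ) → (Fin n → ℝ))
    (hφ0 : ∀ x, φ 0 x = x)
    (hφ : ∀ x, ∀ t ≥ (0:ℝ), HasDerivAt (fun u => φ u x) (F (φ t x)) t)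
    (C : Set (Fin n → ℝ)) (hC : IsOpen C)
    (hCinv : ∀ t ≥ (0:ℝ), φ t '' C ⊆ C)
    (Ψ : (Fin n → ℝ) → ℝ → (Fin n → ℝ) → (Fin n → ℝ))
    (hΨ0 : ∀ x z, Ψ x 0 z = z)
    (hΨ : ∀ x z, ∀ t ≥ (0:ℝ),
      HasDerivAt (fun u => Ψ x u z) (fderiv ℝ F (φ t x) (Ψ x t z)) t)
    (lam : ℝ) (hlam : 0 < lam)
    (hstab : ∀ x ∈ C, ∀ z : Fin n → ℝ, ∀ t ≥ (0:ℝ), ‖Ψ x t z‖ ≤ lam * ‖z‖) :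
    ∀ x ∈ C, ∀ y ∈ C, segment ℝ x y ⊆ C →
      ∀ t ≥ (0:ℝ), ‖φ t x - φ t y‖ ≤ lam * ‖x - y‖ := by
  have hr0 : 0 ≤ r := le_trans (norm_nonneg _) (hFb 0)
  have hK : (0:ℝ) < r + 1 := by linarith
  have hFdiff : ∀ z, DifferentiableAt ℝ F z := fun z =>
    (hF.differentiable one_ne_zero).differentiableAt
  -- F is r-Lipschitz
  have hFlip : ∀ p q : Fin n → ℝ, ‖F p - F q‖ ≤ r * ‖p - q‖ := by
    intro p q
    exact (convex_univ : Convex ℝ (Set.univ : Set (Fin n → ℝ))).norm_image_sub_le_of_norm_fderiv_le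
      (fun ξ _ => hFdiff ξ) (fun ξ _ => hdFb ξ) (Set.mem_univ q) (Set.mem_univ p)
  -- continuity of trajectories on [0, t]
  have hφcont : ∀ a : Fin n → ℝ, ∀ t : ℝ, ContinuousOn (fun u => φ u a) (Set.Icc 0 t) := by
    intro a t u hu
    exact (hφ a u hu.1).continuousAt.continuousWithinAt
  have hΨcont : ∀ a z : Fin n → ℝ, ∀ t : ℝ,
      ContinuousOn (fun u => Ψ a u z) (Set.Icc 0 t) := by
    intro a z t u hu
    exact (hΨ a z u hu.1).continuousAt.continuousWithinAt
  -- crude Gronwall growth estimate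
  have hgrow : ∀ a b : Fin n → ℝ, ∀ t : ℝ, 0 ≤ t →
      ‖φ t a - φ t b‖ ≤ ‖a - b‖ * Real.exp ((r + 1) * t) := by
    intro a b t ht
    have h := norm_le_gronwallBound_of_norm_deriv_right_le (a := 0) (b := t)
      (f := fun u => φ u a - φ u b) (f' := fun u => F (φ u a) - F (φ u b))
      (δ := ‖a - b‖) (K := r + 1) (ε := 0)
      ((hφcont a t).sub (hφcont b t))
      (fun u hu => ((hφ a u hu.1).sub (hφ b u hu.1)).hasDerivWithinAt)
      (by simp [hφ0])
      (fun u hu => by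
        have h1 := hFlip (φ u a) (φ u b)
        have h2 : 0 ≤ ‖φ u a - φ u b‖ := norm_nonneg _
        nlinarith)
      t (Set.mem_Icc.2 ⟨ht, le_rfl⟩)
    rwa [gronwallBound_ε0, sub_zero] at h
  -- trajectories drift at most r * t
  have hdrift : ∀ a : Fin n → ℝ, ∀ t : ℝ, 0 ≤ t → ‖φ t a - a‖ ≤ r * t := by
    intro a t ht
    have h := norm_le_gronwallBound_of_norm_deriv_right_le (a := 0) (b := t)
      (f := fun u => φ u a - a) (f' := fun u => F (φ u a))
      (δ := 0) (K := 0) (ε := r)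
      ((hφcont a t).sub continuousOn_const)
      (fun u hu => ((hφ a u hu.1).sub_const a).hasDerivWithinAt)
      (by simp [hφ0])
      (fun u hu => by simpa using hFb (φ u a))
      t (Set.mem_Icc.2 ⟨ht, le_rfl⟩)
    rw [gronwallBound_K0] at h
    simpa using h
  intro x hx y hy hseg t ht
  set E : ℝ := Real.exp ((r + 1) * t) with hEdef
  have hEpos : 0 < E := Real.exp_pos _
  have hE1 : 1 ≤ E := Real.one_le_exp (by positivity)
  set M : ℝ := ‖x‖ + ‖y‖ with hMdef
  set R : ℝ := M + r * t with hRdef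
  have hsegM : ∀ a ∈ segment ℝ x y, ‖a‖ ≤ M := by
    intro a ha
    have hsub : segment ℝ x y ⊆ Metric.closedBall 0 M :=
      (convex_closedBall (0 : Fin n → ℝ) M).segment_subset
        (mem_closedBall_zero_iff.2 (by simp [hMdef]))
        (mem_closedBall_zero_iff.2 (by simp [hMdef]))
    exact mem_closedBall_zero_iff.1 (hsub ha)
  have hub : ∀ a ∈ segment ℝ x y, ∀ u : ℝ, 0 ≤ u → u ≤ t → ‖φ u a‖ ≤ R := by
    intro a ha u hu hut
    have h1 := hdrift a u hu
    have h2 : ‖φ u a‖ ≤ ‖φ u a - a‖ + ‖a‖ := by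
      calc ‖φ u a‖ = ‖(φ u a - a) + a‖ := by rw [sub_add_cancel]
        _ ≤ ‖φ u a - a‖ + ‖a‖ := norm_add_le _ _
    have h3 := hsegM a ha
    have h4 : r * u ≤ r * t := mul_le_mul_of_nonneg_left hut hr0
    simp only [hRdef]
    linarith
  -- uniform continuity of fderiv F on the relevant ball
  have hUC := (isCompact_closedBall (0 : Fin n → ℝ) R).uniformContinuousOn_of_continuous
    ((hF.continuous_fderiv one_ne_zero).continuousOn)
  rw [Metric.uniformContinuousOn_iff] at hUC
  -- the key local estimate
  have key : ∀ η : ℝ, 0 < η → ∃ δ > 0, ∀ a ∈ segment ℝ x y, ∀ b ∈ segment ℝ x y,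
      ‖a - b‖ * E < δ → ‖φ t a - φ t b‖ ≤ lam * ‖a - b‖ + η * (E * E) * ‖a - b‖ := by
    intro η hη
    obtain ⟨δ, hδpos, hδ⟩ := hUC η hη
    refine ⟨δ, hδpos, ?_⟩
    intro a ha b hb hab
    have haC : a ∈ C := hseg ha
    set g : ℝ → (Fin n → ℝ) := fun u => φ u a - φ u b - Ψ a u (a - b) with hgdef
    have hg0 : g 0 = 0 := by simp [hgdef, hφ0, hΨ0]
    set ε' : ℝ := η * (‖a - b‖ * E) with hε'def
    have hε'0 : 0 ≤ ε' := by positivity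
    have hgb : ‖g t‖ ≤ gronwallBound 0 (r + 1) ε' (t - 0) := by
      apply norm_le_gronwallBound_of_norm_deriv_right_le (a := 0) (b := t)
        (f' := fun u => F (φ u a) - F (φ u b) - fderiv ℝ F (φ u a) (Ψ a u (a - b)))
        (((hφcont a t).sub (hφcont b t)).sub (hΨcont a (a - b) t))
        (fun u hu => (((hφ a u hu.1).sub (hφ b u hu.1)).sub
          (hΨ a (a - b) u hu.1)).hasDerivWithinAt)
        (by simp [hφ0, hΨ0]) ?_ t (Set.mem_Icc.2 ⟨ht, le_rfl⟩)
      intro u hu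
      have hu0 : 0 ≤ u := hu.1
      have hut : u ≤ t := le_of_lt hu.2
      set pa := φ u a with hpa
      set pb := φ u b with hpb
      set L := fderiv ℝ F pa with hL
      have hpaR : ‖pa‖ ≤ R := hub a ha u hu0 hut
      have hpbR : ‖pb‖ ≤ R := hub b hb u hu0 hut
      have hdiffab : ‖pa - pb‖ ≤ ‖a - b‖ * E := by
        have h1 := hgrow a b u hu0
        have h2 : Real.exp ((r + 1) * u) ≤ E := by
          rw [hEdef]
          exact Real.exp_le_exp.2 (mul_le_mul_of_nonneg_left hut (le_of_lt hK))
        have h3 : 0 ≤ ‖a - b‖ := norm_nonneg _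
        nlinarith
      have hsubball : segment ℝ pb pa ⊆ Metric.closedBall 0 R :=
        (convex_closedBall (0 : Fin n → ℝ) R).segment_subset
          (mem_closedBall_zero_iff.2 hpbR) (mem_closedBall_zero_iff.2 hpaR)
      have hsubnear : segment ℝ pb pa ⊆ Metric.closedBall pa ‖pa - pb‖ :=
        (convex_closedBall pa ‖pa - pb‖).segment_subset
          (by rw [Metric.mem_closedBall, dist_eq_norm, norm_sub_rev])
          (by simp)
      have hmv : ‖F pa - F pb - L (pa - pb)‖ ≤ η * ‖pa - pb‖ := by
        apply (convex_segment pb pa).norm_image_sub_le_of_norm_fderiv_le'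
          (fun ξ _ => hFdiff ξ) ?_ (left_mem_segment ℝ pb pa) (right_mem_segment ℝ pb pa)
        intro ξ hξ
        have hd : dist ξ pa < δ := by
          have h1 : dist ξ pa ≤ ‖pa - pb‖ := hsubnear hξ
          exact lt_of_le_of_lt (le_trans h1 hdiffab) hab
        have := hδ ξ (hsubball hξ) pa (hsubball (right_mem_segment ℝ pb pa)) hd
        rw [dist_eq_norm] at this
        exact le_of_lt this
      have hΨeq : Ψ a u (a - b) = (pa - pb) - g u := by
        simp only [hgdef, hpa, hpb]
        abel
      have hLg : ‖L (g u)‖ ≤ r * ‖g u‖ :=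
        le_trans (L.le_opNorm _) (mul_le_mul_of_nonneg_right (hdFb pa) (norm_nonneg _))
      calc ‖F pa - F pb - L (Ψ a u (a - b))‖
          = ‖(F pa - F pb - L (pa - pb)) + L (g u)‖ := by
            rw [hΨeq, map_sub]; congr 1; abel
        _ ≤ ‖F pa - F pb - L (pa - pb)‖ + ‖L (g u)‖ := norm_add_le _ _
        _ ≤ η * ‖pa - pb‖ + r * ‖g u‖ := add_le_add hmv hLg
        _ ≤ (r + 1) * ‖g u‖ + ε' := by
            have h2 : η * ‖pa - pb‖ ≤ ε' := by
              rw [hε'def]; nlinarith [norm_nonneg (g u)]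
            nlinarith [norm_nonneg (g u)]
    have hgt : ‖g t‖ ≤ η * (E * E) * ‖a - b‖ := by
      rw [sub_zero, gronwallBound_of_K_ne_0 (ne_of_gt hK)] at hgb
      simp only [zero_mul, zero_add] at hgb
      refine le_trans hgb ?_
      rw [div_mul_eq_mul_div, div_le_iff₀ hK]
      have h3 : 0 ≤ ‖a - b‖ := norm_nonneg _
      rw [hε'def, ← hEdef]
      have h5 : 0 ≤ η * ‖a - b‖ * E := by positivity
      have h4 : E - 1 ≤ E * (r + 1) := by nlinarith
      nlinarith [mul_le_mul_of_nonneg_left h4 h5]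
    have hΨb := hstab a haC (a - b) t ht
    calc ‖φ t a - φ t b‖ = ‖Ψ a t (a - b) + g t‖ := by
          congr 1; simp only [hgdef]; abel
      _ ≤ ‖Ψ a t (a - b)‖ + ‖g t‖ := norm_add_le _ _
      _ ≤ lam * ‖a - b‖ + η * (E * E) * ‖a - b‖ := add_le_add hΨb hgt
  -- conclusion via an ε-argument and telescoping
  apply le_of_forall_pos_le_add
  intro ε hε
  set η : ℝ := ε / (E * E * ‖x - y‖ + 1) with hηdef
  have hηpos : 0 < η := div_pos hε (by positivity)
  obtain ⟨δ, hδpos, hkey⟩ := key η hηpos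
  obtain ⟨N, hN⟩ := exists_nat_gt (‖x - y‖ * E / δ)
  have hN0 : 0 < (N : ℝ) := lt_of_le_of_lt (by positivity) hN
  set p : ℕ → (Fin n → ℝ) := fun i => x + ((i : ℝ) / N) • (y - x) with hpdef
  have hpseg : ∀ i : ℕ, i ≤ N → p i ∈ segment ℝ x y := by
    intro i hi
    rw [segment_eq_image']
    refine ⟨(i : ℝ) / N, ⟨by positivity, ?_⟩, rfl⟩
    rw [div_le_one hN0]
    exact_mod_cast hi
  have hpd : ∀ i : ℕ, ‖p i - p (i + 1)‖ = ‖x - y‖ / N := by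
    intro i
    have h1 : p i - p (i + 1) = (-(1 / (N : ℝ))) • (y - x) := by
      simp only [hpdef, Nat.cast_add, Nat.cast_one]
      have h2 : ((i : ℝ) + 1) / N = (i : ℝ) / N + 1 / N := by ring
      rw [h2]
      module
    rw [h1, norm_smul, Real.norm_eq_abs, abs_neg, abs_of_nonneg (by positivity),
      norm_sub_rev x y]
    ring
  have hsmall : ∀ i : ℕ, ‖p i - p (i + 1)‖ * E < δ := by
    intro i
    rw [hpd i, div_mul_eq_mul_div, div_lt_iff₀ hN0]
    rw [div_lt_iff₀ hδpos] at hN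
    linarith
  have htel : φ t x - φ t y = ∑ i ∈ Finset.range N, (φ t (p i) - φ t (p (i + 1))) := by
    rw [Finset.sum_range_sub' (fun i => φ t (p i)) N]
    have hp0 : p 0 = x := by
      simp only [hpdef, Nat.cast_zero, zero_div, zero_smul, add_zero]
    have hpN : p N = y := by
      simp only [hpdef, div_self (ne_of_gt hN0), one_smul]
      abel
    rw [hp0, hpN]
  have hηb : η * (E * E) * ‖x - y‖ ≤ ε := by
    rw [hηdef, div_mul_eq_mul_div, div_mul_eq_mul_div,
      div_le_iff₀ (show (0:ℝ) < E * E * ‖x - y‖ + 1 by positivity)]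
    nlinarith [hε.le, norm_nonneg (x - y), hEpos.le]
  calc ‖φ t x - φ t y‖ ≤ ∑ i ∈ Finset.range N, ‖φ t (p i) - φ t (p (i + 1))‖ := by
        rw [htel]; exact norm_sum_le _ _
    _ ≤ ∑ i ∈ Finset.range N, (lam * (‖x - y‖ / N) + η * (E * E) * (‖x - y‖ / N)) := by
        refine Finset.sum_le_sum fun i hi => ?_
        have hi' := Finset.mem_range.1 hi
        have h := hkey (p i) (hpseg i hi'.le) (p (i + 1)) (hpseg (i + 1) hi')
          (hsmall i)
        rwa [hpd i] at h
    _ = lam * ‖x - y‖ + η * (E * E) * ‖x - y‖ := by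
        rw [Finset.sum_const, Finset.card_range, nsmul_eq_mul]
        field_simp
    _ ≤ lam * ‖x - y‖ + ε := by linarith
end

section
/- Let φᵗ be the flow of ẋ = F(x), F = (f₁,…,fₙ) C¹ with uniformly bounded F and dF (bound r). Suppose C ⊆ ℝⁿ is open, φᵗ-positive invariant, and there exists α > 0 with fᵢ(φᵗ(x)) ≥ α for all x ∈ C, t ≥ 0, i. Let Ψₓᵗ denote the flow of the linearization ẏ = dF(φᵗ(x))y. If the positive cone V₊ = {z ∈ ℝⁿ : zᵢ ≥ 0 ∀i} is Ψ_C-positive invariant with control time δ ≥ 0 (i.e. for each x ∈ C there is tₓ ∈ [0,δ] with Ψₓ^{t−tₓ}(V₊) ⊆ V₊ for all t ≥ tₓ), then the system is C-positive stable with constant λ = (r/α)·exp(rδ). -/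
open Set Metric Real

private lemma stmt1_lip {n : ℕ} {F : (Fin n → ℝ) → Fin n → ℝ} {r : ℝ} (hr : 0 ≤ r)
    (hdFb : ∀ z, ‖fderiv ℝ F z‖ ≤ r) (p : Fin n → ℝ) :
    LipschitzWith ⟨r, hr⟩ fun y => fderiv ℝ F p y :=
  LipschitzWith.of_dist_le_mul fun a b => by
    rw [dist_eq_norm, dist_eq_norm, ← map_sub]
    exact le_trans ((fderiv ℝ F p).le_opNorm _)
      (mul_le_mul_of_nonneg_right (hdFb p) (norm_nonneg _))

private lemma stmt1_uniq {n : ℕ} {F : (Fin n → ℝ) → Fin n → ℝ} {r : ℝ} (hr : 0 ≤ r)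
    (hdFb : ∀ z, ‖fderiv ℝ F z‖ ≤ r) (w : ℝ → Fin n → ℝ) (f g : ℝ → Fin n → ℝ) (a b : ℝ)
    (hf : ∀ t ∈ Set.Icc a b, HasDerivAt f (fderiv ℝ F (w t) (f t)) t)
    (hg : ∀ t ∈ Set.Icc a b, HasDerivAt g (fderiv ℝ F (w t) (g t)) t)
    (hab : f a = g a) : ∀ t ∈ Set.Icc a b, f t = g t := fun t ht =>
  ODE_solution_unique (v := fun u y => fderiv ℝ F (w u) y) (K := ⟨r, hr⟩)
    (fun u => stmt1_lip hr hdFb (w u))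
    (fun s hs => (hf s hs).continuousAt.continuousWithinAt)
    (fun s hs => (hf s (Set.Ico_subset_Icc_self hs)).hasDerivWithinAt)
    (fun s hs => (hg s hs).continuousAt.continuousWithinAt)
    (fun s hs => (hg s (Set.Ico_subset_Icc_self hs)).hasDerivWithinAt) hab ht

private lemma stmt1_grow {n : ℕ} {F : (Fin n → ℝ) → Fin n → ℝ} {r : ℝ} (hr : 0 ≤ r)
    (hdFb : ∀ z, ‖fderiv ℝ F z‖ ≤ r) (w : ℝ → Fin n → ℝ) (f : ℝ → Fin n → ℝ) (a b : ℝ)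
    (hf : ∀ t ∈ Set.Icc a b, HasDerivAt f (fderiv ℝ F (w t) (f t)) t) :
    ∀ t ∈ Set.Icc a b, ‖f t‖ ≤ ‖f a‖ * Real.exp (r * (t - a)) := by
  intro t ht
  have h := norm_le_gronwallBound_of_norm_deriv_right_le (f := f)
    (f' := fun s => fderiv ℝ F (w s) (f s)) (δ := ‖f a‖) (K := r) (ε := 0) (a := a) (b := b)
    (fun s hs => (hf s hs).continuousAt.continuousWithinAt)
    (fun s hs => (hf s (Set.Ico_subset_Icc_self hs)).hasDerivWithinAt)
    le_rfl
    (fun s hs => by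
      rw [add_zero]
      exact le_trans ((fderiv ℝ F (w s)).le_opNorm _)
        (mul_le_mul_of_nonneg_right (hdFb _) (norm_nonneg _)))
    t ht
  rwa [gronwallBound_ε0] at h

/-- if the positive cone `V₊` is `Ψ_C`-positive invariant with control
time `δ`, and all components of `F` along trajectories in `C` are bounded below by
`α > 0`, then the system is `C`-positive stable with constant `(r/α)·exp(rδ)`. -/
theorem stmt_1 (n : ℕ) (F : (Fin n → ℝ) → (Fin n → ℝ)) (r : ℝ)
    (hF : ContDiff ℝ 1 F)
    (hFb : ∀ z, ‖F z‖ ≤ r) (hdFb : ∀ z, ‖fderiv ℝ F z‖ ≤ r)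
    (φ : ℝ → (Fin n → ℝ) → (Fin n → ℝ))
    (hφ0 : ∀ x, φ 0 x = x)
    (hφ : ∀ x, ∀ t ≥ (0:ℝ), HasDerivAt (fun u => φ u x) (F (φ t x)) t)
    (C : Set (Fin n → ℝ)) (hC : IsOpen C)
    (hCinv : ∀ t ≥ (0:ℝ), φ t '' C ⊆ C)
    (α : ℝ) (hα : 0 < α)
    (hFα : ∀ x ∈ C, ∀ t ≥ (0:ℝ), ∀ i, α ≤ F (φ t x) i)
    -- `Ψ x s t z` : the solution at time `t` of the linearized system
    -- `ẏ = dF(φᵗ(x))y` that equals `z` at time `s`.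
    (Ψ : (Fin n → ℝ) → ℝ → ℝ → (Fin n → ℝ) → (Fin n → ℝ))
    (hΨ0 : ∀ x s z, Ψ x s s z = z)
    (hΨ : ∀ x s z, ∀ t,
      HasDerivAt (fun u => Ψ x s u z) (fderiv ℝ F (φ t x) (Ψ x s t z)) t)
    (δ : ℝ) (hδ : 0 ≤ δ)
    (hcone : ∀ x ∈ C, ∃ tx ∈ Set.Icc 0 δ, ∀ t ≥ tx, ∀ z : Fin n → ℝ,
      (∀ i, 0 ≤ z i) → ∀ i, 0 ≤ Ψ x tx t z i) :
    ∀ x ∈ C, ∃ ε > 0, ∀ y ∈ C, ‖x - y‖ < ε →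
      ∀ t ≥ (0:ℝ), ‖φ t x - φ t y‖ ≤ (r / α * Real.exp (r * δ)) * ‖x - y‖ := by
  classical
  rcases Nat.eq_zero_or_pos n with hn | hn
  · subst hn
    intro x hx
    refine ⟨1, one_pos, fun y _ _ t _ => ?_⟩
    have h1 : (φ t x - φ t y) = 0 := Subsingleton.elim _ _
    have h2 : (x - y) = 0 := Subsingleton.elim _ _
    rw [h1, h2, norm_zero, mul_zero]
  intro x hx
  set lam := r / α * Real.exp (r * δ) with hlamdef
  have hr0 : 0 ≤ r := le_trans (norm_nonneg _) (hFb 0)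
  have hαr : α ≤ r := by
    have h1 := hFα x hx 0 le_rfl ⟨0, hn⟩
    rw [hφ0] at h1
    calc α ≤ F x ⟨0, hn⟩ := h1
      _ ≤ |F x ⟨0, hn⟩| := le_abs_self _
      _ ≤ ‖F x‖ := by rw [← Real.norm_eq_abs]; exact norm_le_pi_norm _ _
      _ ≤ r := hFb x
  have hr : 0 < r := lt_of_lt_of_le hα hαr
  have hra1 : 1 ≤ r / α := (one_le_div hα).2 hαr
  have hlam0 : 0 ≤ lam := by positivity
  have hFdiff : Differentiable ℝ F := hF.differentiable one_ne_zero
  have hFlip : ∀ a b : Fin n → ℝ, ‖F a - F b‖ ≤ r * ‖a - b‖ := fun a b =>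
    Convex.norm_image_sub_le_of_norm_fderiv_le (fun z _ => hFdiff z)
      (fun z _ => hdFb z) convex_univ (mem_univ b) (mem_univ a)
  -- Ψ commutes with scalar multiplication
  have hsmul : ∀ w (s : ℝ) (c : ℝ) (z : Fin n → ℝ), ∀ t ≥ s,
      Ψ w s t (c • z) = c • Ψ w s t z := by
    intro w s c z t hst
    refine stmt1_uniq hr0 hdFb (fun u => φ u w) (fun u => Ψ w s u (c • z))
      (fun u => c • Ψ w s u z) s t
      (fun u _ => hΨ w s (c • z) u) ?_ (by simp [hΨ0]) t ⟨hst, le_rfl⟩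
    intro u _
    have h := (hΨ w s z u).const_smul c; rw [← map_smul] at h; exact h
  -- derivative of t ↦ F (φ t w)
  have hFφ : ∀ w : Fin n → ℝ, ∀ t ≥ (0:ℝ),
      HasDerivAt (fun u => F (φ u w)) (fderiv ℝ F (φ t w) (F (φ t w))) t :=
    fun w t ht => (hFdiff (φ t w)).hasFDerivAt.comp_hasDerivAt t (hφ w t ht)
  -- Ψ applied to c • F(φ s w) + z
  have hcomb : ∀ w : Fin n → ℝ, ∀ s ≥ (0:ℝ), ∀ (c : ℝ) (z : Fin n → ℝ), ∀ t ≥ s,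
      Ψ w s t (c • F (φ s w) + z) = c • F (φ t w) + Ψ w s t z := by
    intro w s hs c z t hst
    refine stmt1_uniq hr0 hdFb (fun u => φ u w)
      (fun u => Ψ w s u (c • F (φ s w) + z)) (fun u => c • F (φ u w) + Ψ w s u z)
      s t (fun u _ => hΨ _ _ _ u) ?_ (by simp [hΨ0]) t ⟨hst, le_rfl⟩
    intro u hu
    have h1 := ((hFφ w u (le_trans hs hu.1)).const_smul c).add (hΨ w s z u)
    rw [← map_smul, ← map_add] at h1; exact h1
  -- key norm bound for the linearized flow
  have key : ∀ w ∈ C, ∀ t ≥ (0:ℝ), ∀ z : Fin n → ℝ, ‖Ψ w 0 t z‖ ≤ lam * ‖z‖ := by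
    intro w hw t ht z
    obtain ⟨tx, ⟨htx0, htxδ⟩, hco⟩ := hcone w hw
    have grow : ∀ b ∈ Set.Icc (0:ℝ) δ, ‖Ψ w 0 b z‖ ≤ ‖z‖ * Real.exp (r * δ) := by
      intro b hb
      have h1 := stmt1_grow hr0 hdFb (fun u => φ u w) (fun u => Ψ w 0 u z) 0 b
        (fun u _ => hΨ w 0 z u) b ⟨hb.1, le_rfl⟩
      simp only [hΨ0, sub_zero] at h1
      refine h1.trans ?_
      have := Real.exp_le_exp.2 (mul_le_mul_of_nonneg_left hb.2 hr0)
      exact mul_le_mul_of_nonneg_left this (norm_nonneg _)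
    rcases le_total t tx with httx | htxt
    · -- t ≤ tx ≤ δ : pure Grönwall growth
      have h1 : ‖Ψ w 0 t z‖ ≤ ‖z‖ * Real.exp (r * δ) :=
        grow t ⟨ht, httx.trans htxδ⟩
      refine h1.trans ?_
      have h2 : (1:ℝ) * (Real.exp (r * δ) * ‖z‖) ≤ r / α * (Real.exp (r * δ) * ‖z‖) :=
        mul_le_mul_of_nonneg_right hra1 (by positivity)
      calc ‖z‖ * Real.exp (r * δ) = 1 * (Real.exp (r * δ) * ‖z‖) := by ring
        _ ≤ r / α * (Real.exp (r * δ) * ‖z‖) := h2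
        _ = lam * ‖z‖ := by rw [hlamdef]; ring
    · -- tx ≤ t : semigroup + cone argument
      set z' := Ψ w 0 tx z with hz'def
      have hsg : Ψ w 0 t z = Ψ w tx t z' := by
        refine stmt1_uniq hr0 hdFb (fun u => φ u w) (fun u => Ψ w 0 u z)
          (fun u => Ψ w tx u z') tx t (fun u _ => hΨ w 0 z u)
          (fun u _ => hΨ w tx z' u) (by simp [hΨ0, hz'def]) t ⟨htxt, le_rfl⟩
      have hc0 : 0 ≤ ‖z'‖ / α := div_nonneg (norm_nonneg _) hα.le
      have hneg : Ψ w tx t (-z') = - Ψ w tx t z' := by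
        have := hsmul w tx (-1) z' t htxt
        simpa using this
      have habs : ∀ j, |z' j| ≤ ‖z'‖ := fun j => by
        rw [← Real.norm_eq_abs]; exact norm_le_pi_norm z' j
      have hFtx : ∀ j, α ≤ F (φ tx w) j := hFα w hw tx htx0
      have hmulα : ∀ j, ‖z'‖ ≤ ‖z'‖ / α * F (φ tx w) j := fun j => by
        calc ‖z'‖ = ‖z'‖ / α * α := by field_simp
          _ ≤ ‖z'‖ / α * F (φ tx w) j := mul_le_mul_of_nonneg_left (hFtx j) hc0
      have comp : ∀ i, |Ψ w tx t z' i| ≤ ‖z'‖ / α * F (φ t w) i := by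
        intro i
        have hub : Ψ w tx t z' i ≤ ‖z'‖ / α * F (φ t w) i := by
          have hq : ∀ j, 0 ≤ ((‖z'‖ / α) • F (φ tx w) + (-z')) j := by
            intro j
            have := (habs j).trans (hmulα j)
            have h3 : z' j ≤ |z' j| := le_abs_self _
            simp only [Pi.add_apply, Pi.smul_apply, Pi.neg_apply, smul_eq_mul]
            linarith
          have h4 := hco t htxt _ hq i
          rw [hcomb w tx htx0 (‖z'‖ / α) (-z') t htxt, hneg] at h4
          simp only [Pi.add_apply, Pi.smul_apply, Pi.neg_apply, smul_eq_mul] at h4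
          linarith
        have hlb : -(‖z'‖ / α * F (φ t w) i) ≤ Ψ w tx t z' i := by
          have hq : ∀ j, 0 ≤ ((‖z'‖ / α) • F (φ tx w) + z') j := by
            intro j
            have := (habs j).trans (hmulα j)
            have h3 : -z' j ≤ |z' j| := neg_le_abs _
            simp only [Pi.add_apply, Pi.smul_apply, smul_eq_mul]
            linarith
          have h4 := hco t htxt _ hq i
          rw [hcomb w tx htx0 (‖z'‖ / α) z' t htxt] at h4
          simp only [Pi.add_apply, Pi.smul_apply, smul_eq_mul] at h4
          linarith
        exact abs_le.2 ⟨hlb, hub⟩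
      have hFtb : ∀ i, F (φ t w) i ≤ r := fun i =>
        ((le_abs_self _).trans (by rw [← Real.norm_eq_abs]; exact norm_le_pi_norm _ i)).trans
          (hFb _)
      have hnorm : ‖Ψ w tx t z'‖ ≤ ‖z'‖ / α * r := by
        refine (pi_norm_le_iff_of_nonneg (mul_nonneg hc0 hr0)).2 fun i => ?_
        rw [Real.norm_eq_abs]
        exact (comp i).trans (mul_le_mul_of_nonneg_left (hFtb i) hc0)
      have hz'b : ‖z'‖ ≤ ‖z‖ * Real.exp (r * δ) := grow tx ⟨htx0, htxδ⟩
      calc ‖Ψ w 0 t z‖ = ‖Ψ w tx t z'‖ := by rw [hsg]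
        _ ≤ ‖z'‖ / α * r := hnorm
        _ = r / α * ‖z'‖ := by ring
        _ ≤ r / α * (‖z‖ * Real.exp (r * δ)) :=
            mul_le_mul_of_nonneg_left hz'b (by positivity)
        _ = lam * ‖z‖ := by rw [hlamdef]; ring
  -- the linearized flow as a continuous linear map
  have hlin : ∀ (w : Fin n → ℝ) (t : ℝ), 0 ≤ t →
      ∃ L : (Fin n → ℝ) →L[ℝ] (Fin n → ℝ), ∀ z, L z = Ψ w 0 t z := by
    intro w t ht
    have hadd : ∀ z1 z2, Ψ w 0 t (z1 + z2) = Ψ w 0 t z1 + Ψ w 0 t z2 := by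
      intro z1 z2
      refine stmt1_uniq hr0 hdFb (fun u => φ u w) (fun u => Ψ w 0 u (z1 + z2))
        (fun u => Ψ w 0 u z1 + Ψ w 0 u z2) 0 t
        (fun u _ => hΨ w 0 (z1 + z2) u) ?_ (by simp [hΨ0]) t ⟨ht, le_rfl⟩
      intro u _
      have h := (hΨ w 0 z1 u).add (hΨ w 0 z2 u); rw [← map_add] at h; exact h
    exact ⟨LinearMap.toContinuousLinearMap
      { toFun := fun z => Ψ w 0 t z
        map_add' := hadd
        map_smul' := fun c z => by simpa using hsmul w 0 c z t ht }, fun z => rfl⟩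
  choose L hL using hlin
  -- differentiability of the flow in the initial condition
  have hder : ∀ w ∈ C, ∀ (T : ℝ) (hT : 0 ≤ T),
      HasFDerivAt (fun y => φ T y) (L w T hT) w := by
    intro w hw T hT
    refine HasFDerivAt.of_isLittleO (Asymptotics.isLittleO_iff.2 ?_)
    intro ε hε
    have hcont : ContinuousOn (fun s => φ s w) (Set.Icc 0 T) :=
      fun s hs => (hφ w s hs.1).continuousAt.continuousWithinAt
    have hKcomp : IsCompact (Metric.cthickening 1 ((fun s => φ s w) '' Set.Icc 0 T)) :=
      (isCompact_Icc.image_of_continuousOn hcont).cthickening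
    have hUC := hKcomp.uniformContinuousOn_of_continuous
      ((hF.continuous_fderiv one_ne_zero).continuousOn)
    set ε' := r * ε / (Real.exp (r * T) * Real.exp (r * T)) with hε'def
    have hε' : 0 < ε' := by positivity
    obtain ⟨ρ1, hρ1, hUC'⟩ := Metric.uniformContinuousOn_iff.1 hUC ε' hε'
    set ρ2 := min ρ1 1 with hρ2def
    have hρ2 : 0 < ρ2 := lt_min hρ1 one_pos
    set ρ := ρ2 / 2 * Real.exp (-(r * T)) with hρdef
    have hρ : 0 < ρ := by positivity
    filter_upwards [Metric.ball_mem_nhds w hρ] with y hy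
    have hvρ : ‖y - w‖ < ρ := by rw [← dist_eq_norm]; exact hy
    have hgd : ∀ s ∈ Set.Icc (0:ℝ) T,
        HasDerivAt (fun u => φ u y - φ u w) (F (φ s y) - F (φ s w)) s :=
      fun s hs => (hφ y s hs.1).sub (hφ w s hs.1)
    have hgb : ∀ s ∈ Set.Icc (0:ℝ) T, ‖φ s y - φ s w‖ ≤ ‖y - w‖ * Real.exp (r * T) := by
      intro s hs
      have h := norm_le_gronwallBound_of_norm_deriv_right_le
        (f := fun u => φ u y - φ u w) (f' := fun s => F (φ s y) - F (φ s w))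
        (δ := ‖y - w‖) (K := r) (ε := 0) (a := 0) (b := T)
        (fun u hu => (hgd u hu).continuousAt.continuousWithinAt)
        (fun u hu => (hgd u (Set.Ico_subset_Icc_self hu)).hasDerivWithinAt)
        (by simp [hφ0]) (fun u _ => by simpa using hFlip (φ u y) (φ u w)) s hs
      rw [gronwallBound_ε0, sub_zero] at h
      exact h.trans (mul_le_mul_of_nonneg_left
        (Real.exp_le_exp.2 (mul_le_mul_of_nonneg_left hs.2 hr0)) (norm_nonneg _))
    have hgs : ∀ s ∈ Set.Icc (0:ℝ) T, ‖φ s y - φ s w‖ ≤ ρ2 / 2 := by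
      intro s hs
      refine (hgb s hs).trans ?_
      have h2 : ‖y - w‖ * Real.exp (r * T) ≤ ρ * Real.exp (r * T) :=
        mul_le_mul_of_nonneg_right hvρ.le (Real.exp_pos _).le
      refine h2.trans_eq ?_
      rw [hρdef, Real.exp_neg]
      have := (Real.exp_pos (r * T)).ne'
      field_simp
    have hb : ∀ s ∈ Set.Icc (0:ℝ) T,
        ‖F (φ s y) - F (φ s w) - fderiv ℝ F (φ s w) (φ s y - φ s w)‖
          ≤ ε' * (‖y - w‖ * Real.exp (r * T)) := by
      intro s hs
      have hpK : φ s w ∈ Metric.cthickening 1 ((fun s => φ s w) '' Set.Icc 0 T) :=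
        Metric.self_subset_cthickening _ (Set.mem_image_of_mem _ hs)
      have hsubK : Metric.closedBall (φ s w) (ρ2 / 2) ⊆
          Metric.cthickening 1 ((fun s => φ s w) '' Set.Icc 0 T) := fun ξ hξ =>
        Metric.mem_cthickening_of_dist_le ξ (φ s w) 1 _ (Set.mem_image_of_mem _ hs)
          (le_trans (Metric.mem_closedBall.1 hξ)
            (le_trans (half_le_self hρ2.le) (min_le_right ρ1 1)))
      have hyb : φ s y ∈ Metric.closedBall (φ s w) (ρ2 / 2) := by
        rw [Metric.mem_closedBall, dist_eq_norm]; exact hgs s hs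
      have hbd : ∀ ξ ∈ Metric.closedBall (φ s w) (ρ2 / 2),
          ‖fderiv ℝ F ξ - fderiv ℝ F (φ s w)‖ ≤ ε' := by
        intro ξ hξ
        have hd : dist ξ (φ s w) < ρ1 :=
          lt_of_le_of_lt (Metric.mem_closedBall.1 hξ)
            (lt_of_lt_of_le (half_lt_self hρ2) (min_le_left ρ1 1))
        have h5 := hUC' ξ (hsubK hξ) (φ s w) hpK hd
        rw [dist_eq_norm] at h5
        exact h5.le
      have h6 := Convex.norm_image_sub_le_of_norm_hasFDerivWithin_le'
        (fun ξ _ => (hFdiff ξ).hasFDerivAt.hasFDerivWithinAt) hbd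
        (convex_closedBall _ _) (Metric.mem_closedBall_self (by positivity)) hyb
      exact h6.trans (mul_le_mul_of_nonneg_left (hgb s hs) hε'.le)
    set θ := fun s : ℝ => φ s y - φ s w - Ψ w 0 s (y - w) with hθdef
    have hθd : ∀ s ∈ Set.Icc (0:ℝ) T, HasDerivAt θ
        (F (φ s y) - F (φ s w) - fderiv ℝ F (φ s w) (Ψ w 0 s (y - w))) s :=
      fun s hs => ((hφ y s hs.1).sub (hφ w s hs.1)).sub (hΨ w 0 (y - w) s)
    have hθb : ∀ s ∈ Set.Ico (0:ℝ) T,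
        ‖F (φ s y) - F (φ s w) - fderiv ℝ F (φ s w) (Ψ w 0 s (y - w))‖
          ≤ r * ‖θ s‖ + ε' * (‖y - w‖ * Real.exp (r * T)) := by
      intro s hs
      have heq : F (φ s y) - F (φ s w) - fderiv ℝ F (φ s w) (Ψ w 0 s (y - w))
          = (F (φ s y) - F (φ s w) - fderiv ℝ F (φ s w) (φ s y - φ s w))
            + fderiv ℝ F (φ s w) (θ s) := by
        rw [hθdef]
        simp only [map_sub]
        abel
      rw [heq]
      refine (norm_add_le _ _).trans ?_
      rw [add_comm]
      refine add_le_add ?_ (hb s (Set.Ico_subset_Icc_self hs))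
      exact ((fderiv ℝ F (φ s w)).le_opNorm _).trans
        (mul_le_mul_of_nonneg_right (hdFb _) (norm_nonneg _))
    have hθ0 : θ 0 = 0 := by
      rw [hθdef]
      simp [hφ0, hΨ0]
    have hθT := norm_le_gronwallBound_of_norm_deriv_right_le (a := 0) (b := T)
      (f := θ) (f' := fun s => F (φ s y) - F (φ s w) - fderiv ℝ F (φ s w) (Ψ w 0 s (y - w)))
      (δ := 0) (K := r) (ε := ε' * (‖y - w‖ * Real.exp (r * T)))
      (fun u hu => (hθd u hu).continuousAt.continuousWithinAt)
      (fun u hu => (hθd u (Set.Ico_subset_Icc_self hu)).hasDerivWithinAt)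
      (by rw [hθ0, norm_zero]) hθb T ⟨hT, le_rfl⟩
    simp only [gronwallBound_of_K_ne_0 hr.ne', sub_zero] at hθT
    have hgoal : ‖θ T‖ ≤ ε * ‖y - w‖ := by
      refine hθT.trans ?_
      have hE : (0:ℝ) < Real.exp (r * T) := Real.exp_pos _
      have hE1 : (1:ℝ) ≤ Real.exp (r * T) := Real.one_le_exp (by positivity)
      rw [hε'def]
      rw [zero_mul, zero_add]
      have heq2 : r * ε / (Real.exp (r * T) * Real.exp (r * T))
            * (‖y - w‖ * Real.exp (r * T)) / r * (Real.exp (r * T) - 1)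
          = ε * ‖y - w‖ * ((Real.exp (r * T) - 1) / Real.exp (r * T)) := by
        field_simp
      rw [heq2]
      have h7 : (Real.exp (r * T) - 1) / Real.exp (r * T) ≤ 1 :=
        (div_le_one hE).2 (by linarith)
      calc ε * ‖y - w‖ * ((Real.exp (r * T) - 1) / Real.exp (r * T))
          ≤ ε * ‖y - w‖ * 1 :=
            mul_le_mul_of_nonneg_left h7 (by positivity)
        _ = ε * ‖y - w‖ := mul_one _
    have hLw : (L w T hT) (y - w) = Ψ w 0 T (y - w) := hL w T hT (y - w)
    calc ‖(fun y => φ T y) y - (fun y => φ T y) w - (L w T hT) (y - w)‖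
        = ‖θ T‖ := by rw [hθdef, hLw]
      _ ≤ ε * ‖y - w‖ := hgoal
  -- conclusion via the mean value inequality
  obtain ⟨ε, hε, hball⟩ := Metric.isOpen_iff.1 hC x hx
  refine ⟨ε, hε, fun y _ hxy t ht => ?_⟩
  have hxball : x ∈ Metric.ball x ε := Metric.mem_ball_self hε
  have hyball : y ∈ Metric.ball x ε := by
    rw [Metric.mem_ball, dist_eq_norm, ← norm_sub_rev]
    exact hxy
  have hbound : ∀ w ∈ Metric.ball x ε, ‖L w t ht‖ ≤ lam := fun w hw =>
    ContinuousLinearMap.opNorm_le_bound _ hlam0 fun z => by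
      rw [hL]; exact key w (hball hw) t ht z
  have h := Convex.norm_image_sub_le_of_norm_hasFDerivWithin_le
    (f := fun y => φ t y) (f' := fun w => L w t ht) (s := Metric.ball x ε)
    (fun w hw => (hder w (hball hw) t ht).hasFDerivWithinAt) hbound
    (convex_ball x ε) hyball hxball
  simpa using h
end

section
/- Consider the linear system ẏ = A(x,t)y, t ≥ t₀, where A(x,t) = (a_{i,j}(x,t)) is continuous in (x,t) for x ∈ C. Suppose there exist continuous 1-periodic functions p, β : ℝ → ℝ with β > 0 such that for all t ≥ t₀, x ∈ C and all indices i,j,k,l: p(t) − a_{i,j}(x,t) < β(t) and |a_{i,j}(x,t) − a_{k,l}(x,t)| < β(t). Suppose further there exist d > 0 and a positive 1-periodic function θ solving θ̇ = −n p(t) θ + 2 n d β(t) with θ(t) < d for all t. Then the positive orthant V₊ is Ψ^{t−t₀}_C-positive invariant with control time δ = 1: for every x ∈ C there exists tₓ ∈ [t₀, t₀+1] (a time where θ attains its maximum) such that the flow Ψₓ of the linear system satisfies Ψₓ^{t−tₓ}(V₊) ⊆ V₊ for all t ≥ tₓ. -/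
open Matrix

/-- mean-field invariant cone proposition. Under the closeness and
lower-bound assumptions on the entries of `A(x,t)` in terms of `1`-periodic `p, β`,
and assuming a positive `1`-periodic solution `θ < d` of `θ̇ = −npθ + 2ndβ`,
the positive orthant `V₊` is `Ψ^{t−t₀}_C`-positive invariant with control time `1`:
for every `x ∈ C` there is a time `tₓ ∈ [t₀, t₀+1]` where `θ` attains its maximum
such that `Ψₓ^{t−tₓ}(V₊) ⊆ V₊` for all `t ≥ tₓ`. -/
theorem stmt_6 (n : ℕ) (hn : 0 < n) (t₀ : ℝ)
    (C : Set (Fin n → ℝ))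
    (A : (Fin n → ℝ) → ℝ → Matrix (Fin n) (Fin n) ℝ)
    (hAc : Continuous fun q : (Fin n → ℝ) × ℝ => A q.1 q.2)
    -- `Ψ x s t z` : value at time `t` of the solution of `ẏ = A(x,t)y` equal to `z`
    -- at time `s`.
    (Ψ : (Fin n → ℝ) → ℝ → ℝ → (Fin n → ℝ) → (Fin n → ℝ))
    (hΨ0 : ∀ x s z, Ψ x s s z = z)
    (hΨ : ∀ x s z t, HasDerivAt (fun u => Ψ x s u z) (A x t *ᵥ Ψ x s t z) t)
    (p β : ℝ → ℝ) (hp : Continuous p) (hβ : Continuous β)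
    (hpper : ∀ t, p (t + 1) = p t) (hβper : ∀ t, β (t + 1) = β t)
    (hβpos : ∀ t, 0 < β t)
    (hbound : ∀ t ≥ t₀, ∀ x ∈ C, ∀ i j k l,
      p t - A x t i j < β t ∧ |A x t i j - A x t k l| < β t)
    (d : ℝ) (hd : 0 < d) (θ : ℝ → ℝ)
    (hθper : ∀ t, θ (t + 1) = θ t) (hθpos : ∀ t, 0 < θ t)
    (hθode : ∀ t, HasDerivAt θ (-(n : ℝ) * p t * θ t + 2 * (n : ℝ) * d * β t) t)
    (hθd : ∀ t, θ t < d) :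
    ∀ x ∈ C, ∃ tx ∈ Set.Icc t₀ (t₀ + 1), (∀ t, θ t ≤ θ tx) ∧
      ∀ t ≥ tx, ∀ z : Fin n → ℝ, (∀ i, 0 ≤ z i) → ∀ i, 0 ≤ Ψ x tx t z i := by
  intro x hx
  have hn' : (0:ℝ) < n := by exact_mod_cast hn
  have i0 : Fin n := ⟨0, hn⟩
  have hθcont : Continuous θ := continuous_iff_continuousAt.mpr fun t => (hθode t).continuousAt
  -- the maximum point of θ
  obtain ⟨tx, htxmem, htxmax⟩ := (isCompact_Icc (a := t₀) (b := t₀+1)).exists_isMaxOn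
    (Set.nonempty_Icc.mpr (by linarith)) hθcont.continuousOn
  have hmax : ∀ t, θ t ≤ θ tx := by
    intro t
    have hper : Function.Periodic θ 1 := hθper
    obtain ⟨s, hs, hseq⟩ := hper.exists_mem_Ico one_pos t t₀
    rw [hseq]
    exact htxmax ⟨hs.1, hs.2.le⟩
  have ht0tx : t₀ ≤ tx := htxmem.1
  refine ⟨tx, htxmem, hmax, ?_⟩
  intro t1 ht1 z hz
  -- auxiliary functions: R is the primitive of 2ndβ/θ from tx
  obtain ⟨f, hfdef⟩ : ∃ f : ℝ → ℝ, f = fun s => 2 * (n:ℝ) * d * β s / θ s := ⟨_, rfl⟩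
  have hfcont : Continuous f := by
    rw [hfdef]; exact (continuous_const.mul hβ).div hθcont fun s => (hθpos s).ne'
  obtain ⟨R, hRdef⟩ : ∃ R : ℝ → ℝ, R = fun t => ∫ s in tx..t, f s := ⟨_, rfl⟩
  have hR : ∀ t, HasDerivAt R (f t) t := by
    intro t
    rw [hRdef]
    exact intervalIntegral.integral_hasDerivAt_right (hfcont.intervalIntegrable _ _)
      (hfcont.stronglyMeasurableAtFilter _ _) hfcont.continuousAt
  have hRcont : Continuous R := continuous_iff_continuousAt.mpr fun t => (hR t).continuousAt
  have hRnn : ∀ t, tx ≤ t → 0 ≤ R t := by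
    intro t ht
    rw [hRdef]
    refine intervalIntegral.integral_nonneg ht fun u _ => ?_
    rw [hfdef]
    exact div_nonneg
      (mul_nonneg (mul_nonneg (mul_nonneg (by norm_num) hn'.le) hd.le) (hβpos u).le)
      (hθpos u).le
  -- E(t) = exp(-n ∫_tx^t p) expressed through θ and R
  obtain ⟨E, hEdef⟩ : ∃ E : ℝ → ℝ, E = fun t => (θ t / θ tx) * Real.exp (-R t) := ⟨_, rfl⟩
  have hEpos : ∀ t, 0 < E t := by
    intro t; rw [hEdef]
    exact mul_pos (div_pos (hθpos t) (hθpos tx)) (Real.exp_pos _)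
  have hE : ∀ t, HasDerivAt E (-(n:ℝ) * p t * E t) t := by
    intro t
    have h1 : HasDerivAt (fun u => θ u / θ tx)
        ((-(n : ℝ) * p t * θ t + 2 * (n : ℝ) * d * β t) / θ tx) t := (hθode t).div_const _
    have h2 : HasDerivAt (fun u => Real.exp (-R u)) (Real.exp (-R t) * -f t) t :=
      ((hR t).neg).exp
    have h3 := h1.mul h2
    rw [hEdef]
    refine h3.congr_deriv ?_
    rw [hfdef]
    field_simp [(hθpos t).ne', (hθpos tx).ne']
    ring
  have hEcont : Continuous E := continuous_iff_continuousAt.mpr fun t => (hE t).continuousAt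
  have hEtx : E tx = 1 := by
    rw [hEdef, hRdef]; simp [intervalIntegral.integral_same, div_self (hθpos tx).ne']
  have hEle : ∀ t, tx ≤ t → E t ≤ θ t / θ tx := by
    intro t ht
    rw [hEdef]
    have h1 : Real.exp (-R t) ≤ 1 := Real.exp_le_one_iff.mpr (by linarith [hRnn t ht])
    calc (θ t / θ tx) * Real.exp (-R t) ≤ (θ t / θ tx) * 1 :=
          mul_le_mul_of_nonneg_left h1 (div_pos (hθpos t) (hθpos tx)).le
    _ = θ t / θ tx := mul_one _
  obtain ⟨φtx, hφdef⟩ : ∃ v : ℝ, v = d - θ tx := ⟨_, rfl⟩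
  have hφpos : 0 < φtx := by rw [hφdef]; linarith [hθd tx]
  -- the moving-cone coefficient c and its derivative cv
  obtain ⟨c, hcdef⟩ : ∃ c : ℝ → ℝ,
      c = fun t => (d - θ t - φtx * E t) / ((n:ℝ) * d) := ⟨_, rfl⟩
  obtain ⟨cv, hcvdef⟩ : ∃ cv : ℝ → ℝ,
      cv = fun t => (p t * θ t - 2 * d * β t + φtx * (p t * E t)) / d := ⟨_, rfl⟩
  have hc : ∀ t, HasDerivAt c (cv t) t := by
    intro t
    have h1 : HasDerivAt (fun u => d - θ u - φtx * E u)
        (-(-(n : ℝ) * p t * θ t + 2 * (n : ℝ) * d * β t) - φtx * (-(n:ℝ) * p t * E t)) t :=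
      (((hθode t).const_sub d)).sub ((hE t).const_mul φtx)
    have h2 := h1.div_const ((n:ℝ) * d)
    rw [hcdef, hcvdef]
    refine h2.congr_deriv ?_
    field_simp
    ring
  have hccont : Continuous c := continuous_iff_continuousAt.mpr fun t => (hc t).continuousAt
  have hcvcont : Continuous cv := by
    rw [hcvdef]
    exact (((hp.mul hθcont).sub (continuous_const.mul hβ)).add
      (continuous_const.mul (hp.mul hEcont))).div_const d
  have hctx : c tx = 0 := by
    have h1 : (d - θ tx - φtx * E tx) / ((n:ℝ) * d) = 0 := by
      rw [hEtx, hφdef]; ring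
    rw [hcdef]; exact h1
  have hcnn : ∀ t, tx ≤ t → 0 ≤ c t := by
    intro t ht
    rw [hcdef]
    refine div_nonneg ?_ (by positivity)
    have h1 : φtx * E t ≤ φtx * (θ t / θ tx) := mul_le_mul_of_nonneg_left (hEle t ht) hφpos.le
    have h2 : φtx * (θ t / θ tx) ≤ d - θ t := by
      rw [mul_div_assoc', div_le_iff₀ (hθpos tx), hφdef]
      nlinarith [mul_le_mul_of_nonneg_left (hmax t) hd.le, hθpos t, hθpos tx]
    linarith
  have hGpos : ∀ t, 0 < θ t + φtx * E t := fun t =>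
    add_pos (hθpos t) (mul_pos hφpos (hEpos t))
  have hGcont : Continuous (fun t => θ t + φtx * E t) := hθcont.add (continuous_const.mul hEcont)
  have hGd : ∀ t, θ t + φtx * E t = d * (1 - (n:ℝ) * c t) := by
    intro t
    rw [hcdef]
    field_simp
    ring
  obtain ⟨av, havdef⟩ : ∃ av : ℝ → ℝ, av = fun u => A x u i0 i0 := ⟨_, rfl⟩
  have havcont : Continuous av := by
    rw [havdef]
    exact (hAc.comp (Continuous.prodMk_right x)).matrix_elem i0 i0
  obtain ⟨num, hnumdef⟩ : ∃ num : ℝ → ℝ, num = fun u =>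
      (n:ℝ) * (av u + β u) - c u * ((n:ℝ) * ((n:ℝ) * (av u - β u))) - (n:ℝ) * cv u :=
    ⟨_, rfl⟩
  have hnumcont : Continuous num := by
    rw [hnumdef]
    exact ((continuous_const.mul (havcont.add hβ)).sub
      (hccont.mul (continuous_const.mul (continuous_const.mul (havcont.sub hβ))))).sub
      (continuous_const.mul hcvcont)
  obtain ⟨Kf, hKfdef⟩ : ∃ Kf : ℝ → ℝ,
      Kf = fun u => 1 + max 0 (num u) * d / (θ u + φtx * E u) := ⟨_, rfl⟩
  have hKfcont : Continuous Kf := by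
    rw [hKfdef]
    exact continuous_const.add (((continuous_const.max hnumcont).mul continuous_const).div
      hGcont fun t => (hGpos t).ne')
  obtain ⟨ρ, hρdef⟩ : ∃ ρ : ℝ → ℝ, ρ = fun u => Real.exp (∫ s in tx..u, Kf s) := ⟨_, rfl⟩
  have hρ : ∀ t, HasDerivAt ρ (Kf t * ρ t) t := by
    intro t
    have h1 := intervalIntegral.integral_hasDerivAt_right (hKfcont.intervalIntegrable tx t)
      (hKfcont.stronglyMeasurableAtFilter _ _) hKfcont.continuousAt
    have h2 := h1.exp
    rw [hρdef]
    convert h2 using 1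
    rw [mul_comm]
  have hρpos : ∀ t, 0 < ρ t := by intro t; rw [hρdef]; exact Real.exp_pos _
  have hρcont : Continuous ρ := continuous_iff_continuousAt.mpr fun t => (hρ t).continuousAt
  have hρtx : ρ tx = 1 := by rw [hρdef]; simp [intervalIntegral.integral_same]
  -- the solution with initial data z at time tx
  obtain ⟨y, hydef⟩ : ∃ y : ℝ → Fin n → ℝ, y = fun u => Ψ x tx u z := ⟨_, rfl⟩
  have hy : ∀ t, HasDerivAt y (A x t *ᵥ y t) t := by rw [hydef]; exact hΨ x tx z
  have hyi : ∀ (i : Fin n) t, HasDerivAt (fun u => y u i) ((A x t *ᵥ y t) i) t := fun i t =>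
    (ContinuousLinearMap.proj (R := ℝ) (φ := fun _ : Fin n => ℝ) i).hasFDerivAt.comp_hasDerivAt
      t (hy t)
  obtain ⟨S, hSdef⟩ : ∃ S : ℝ → ℝ, S = fun u => ∑ i, y u i := ⟨_, rfl⟩
  have hSder : ∀ t, HasDerivAt S (∑ i, (A x t *ᵥ y t) i) t := by
    intro t
    rw [hSdef]
    exact HasDerivAt.fun_sum fun i _ => hyi i t
  have hycont : ∀ i : Fin n, Continuous fun u => y u i :=
    fun i => continuous_iff_continuousAt.mpr fun t => (hyi i t).continuousAt
  have hScont : Continuous S := continuous_iff_continuousAt.mpr fun t => (hSder t).continuousAt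
  -- the key derivative estimate
  have key : ∀ ε, 0 < ε → ∀ t, tx ≤ t → ∀ i₀ : Fin n,
      (∀ j, 0 ≤ y t j - c t * S t + ε * ρ t) →
      0 < (A x t *ᵥ y t) i₀ - (cv t * S t + c t * (∑ i, (A x t *ᵥ y t) i))
          + ε * (Kf t * ρ t) := by
    intro ε hε t ht i₀ hw0
    have hb := hbound t (le_trans ht0tx ht) x hx
    have havt : av t = A x t i0 i0 := by rw [havdef]
    have hup : ∀ i j, A x t i j ≤ av t + β t := by
      intro i j
      have h := (hb i j i0 i0).2
      rw [abs_sub_lt_iff] at h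
      rw [havt]; linarith [h.1]
    have hlo : ∀ i j, av t - β t ≤ A x t i j := by
      intro i j
      have h := (hb i j i0 i0).2
      rw [abs_sub_lt_iff] at h
      rw [havt]; linarith [h.2]
    have hpab : p t ≤ av t + β t := by
      have h := (hb i0 i0 i0 i0).1
      rw [havt]; linarith
    have hσlo : (n:ℝ) * (av t - β t) ≤ ∑ j, A x t i₀ j := by
      calc (n:ℝ) * (av t - β t) = ∑ _j : Fin n, (av t - β t) := by
            rw [Finset.sum_const, Finset.card_univ, Fintype.card_fin, nsmul_eq_mul]
      _ ≤ ∑ j, A x t i₀ j := Finset.sum_le_sum fun j _ => hlo i₀ j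
    have hσhi : ∑ j, A x t i₀ j ≤ (n:ℝ) * (av t + β t) := by
      calc ∑ j, A x t i₀ j ≤ ∑ _j : Fin n, (av t + β t) :=
            Finset.sum_le_sum fun j _ => hup i₀ j
      _ = (n:ℝ) * (av t + β t) := by
            rw [Finset.sum_const, Finset.card_univ, Fintype.card_fin, nsmul_eq_mul]
    have hcolhi : ∀ j, ∑ i, A x t i j ≤ (n:ℝ) * (av t + β t) := by
      intro j
      calc ∑ i, A x t i j ≤ ∑ _i : Fin n, (av t + β t) :=
            Finset.sum_le_sum fun i _ => hup i j
      _ = (n:ℝ) * (av t + β t) := by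
            rw [Finset.sum_const, Finset.card_univ, Fintype.card_fin, nsmul_eq_mul]
    have hrowlo : ∀ i, (n:ℝ) * (av t - β t) ≤ ∑ j, A x t i j := by
      intro i
      calc (n:ℝ) * (av t - β t) = ∑ _j : Fin n, (av t - β t) := by
            rw [Finset.sum_const, Finset.card_univ, Fintype.card_fin, nsmul_eq_mul]
      _ ≤ ∑ j, A x t i j := Finset.sum_le_sum fun j _ => hlo i j
    have hrowhi : ∀ i, ∑ j, A x t i j ≤ (n:ℝ) * (av t + β t) := by
      intro i
      calc ∑ j, A x t i j ≤ ∑ _j : Fin n, (av t + β t) :=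
            Finset.sum_le_sum fun j _ => hup i j
      _ = (n:ℝ) * (av t + β t) := by
            rw [Finset.sum_const, Finset.card_univ, Fintype.card_fin, nsmul_eq_mul]
    have hTlo : (n:ℝ) * ((n:ℝ) * (av t - β t)) ≤ ∑ i : Fin n, ∑ j, A x t i j := by
      calc (n:ℝ) * ((n:ℝ) * (av t - β t)) = ∑ _i : Fin n, (n:ℝ) * (av t - β t) := by
            rw [Finset.sum_const, Finset.card_univ, Fintype.card_fin, nsmul_eq_mul]
      _ ≤ ∑ i : Fin n, ∑ j, A x t i j := Finset.sum_le_sum fun i _ => hrowlo i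
    have hThi : ∑ i : Fin n, ∑ j, A x t i j ≤ (n:ℝ) * ((n:ℝ) * (av t + β t)) := by
      calc ∑ i : Fin n, ∑ j, A x t i j ≤ ∑ _i : Fin n, (n:ℝ) * (av t + β t) :=
            Finset.sum_le_sum fun i _ => hrowhi i
      _ = (n:ℝ) * ((n:ℝ) * (av t + β t)) := by
            rw [Finset.sum_const, Finset.card_univ, Fintype.card_fin, nsmul_eq_mul]
    -- decomposition y = w + q
    obtain ⟨w, hwdef⟩ : ∃ w : Fin n → ℝ,
        w = fun j => y t j - c t * S t + ε * ρ t := ⟨_, rfl⟩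
    have hw : ∀ j, 0 ≤ w j := by intro j; rw [hwdef]; exact hw0 j
    obtain ⟨q, hqdef⟩ : ∃ q : ℝ, q = c t * S t - ε * ρ t := ⟨_, rfl⟩
    have hyw : ∀ j, y t j = w j + q := by
      intro j; rw [hwdef, hqdef]; ring
    have hSW : S t = (∑ j, w j) + (n:ℝ) * q := by
      have h1 : S t = ∑ j, y t j := by rw [hSdef]
      rw [h1, Finset.sum_congr rfl fun j _ => hyw j, Finset.sum_add_distrib,
        Finset.sum_const, Finset.card_univ, Fintype.card_fin, nsmul_eq_mul]
    have e_mv : (A x t *ᵥ y t) i₀ = (∑ j, A x t i₀ j * w j) + q * (∑ j, A x t i₀ j) := by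
      have h1 : (A x t *ᵥ y t) i₀ = ∑ j, A x t i₀ j * y t j := by
        simp [Matrix.mulVec, dotProduct]
      rw [h1]
      rw [Finset.sum_congr rfl fun j _ => by rw [hyw j]]
      rw [show (∑ j, A x t i₀ j * (w j + q)) = ∑ j, (A x t i₀ j * w j + A x t i₀ j * q) from
        Finset.sum_congr rfl fun j _ => by ring]
      rw [Finset.sum_add_distrib, ← Finset.sum_mul]
      ring
    have e_SP : (∑ i, (A x t *ᵥ y t) i)
        = (∑ j, (∑ i, A x t i j) * w j) + q * (∑ i : Fin n, ∑ j, A x t i j) := by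
      have h1 : ∀ i : Fin n, (A x t *ᵥ y t) i = ∑ j, A x t i j * y t j := by
        intro i; simp [Matrix.mulVec, dotProduct]
      have e4 : ∑ i : Fin n, ∑ j, A x t i j * w j = ∑ j, (∑ i, A x t i j) * w j := by
        rw [Finset.sum_comm]
        exact Finset.sum_congr rfl fun j _ => (Finset.sum_mul _ _ _).symm
      have e3 : ∑ i : Fin n, ∑ j, A x t i j * q = (∑ i : Fin n, ∑ j, A x t i j) * q := by
        rw [Finset.sum_mul]
        exact Finset.sum_congr rfl fun i _ => (Finset.sum_mul _ _ _).symm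
      calc (∑ i, (A x t *ᵥ y t) i)
          = ∑ i : Fin n, ∑ j, (A x t i j * w j + A x t i j * q) := by
            refine Finset.sum_congr rfl fun i _ => ?_
            rw [h1 i]
            refine Finset.sum_congr rfl fun j _ => ?_
            rw [hyw j]; ring
      _ = (∑ i : Fin n, ∑ j, A x t i j * w j) + ∑ i : Fin n, ∑ j, A x t i j * q := by
            rw [← Finset.sum_add_distrib]
            exact Finset.sum_congr rfl fun i _ => Finset.sum_add_distrib
      _ = (∑ j, (∑ i, A x t i j) * w j) + q * (∑ i : Fin n, ∑ j, A x t i j) := by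
            rw [e4, e3]; ring
    -- now purely scalar reasoning
    have hcnn' : 0 ≤ c t := hcnn t ht
    have hρt := hρpos t
    have hWnn : 0 ≤ ∑ j, w j := Finset.sum_nonneg fun j _ => hw j
    have hG := hGpos t
    have b1 : (av t - β t) * (∑ j, w j) ≤ ∑ j, A x t i₀ j * w j := by
      rw [Finset.mul_sum]
      exact Finset.sum_le_sum fun j _ => mul_le_mul_of_nonneg_right (hlo i₀ j) (hw j)
    have b2 : ∑ j, (∑ i, A x t i j) * w j ≤ ((n:ℝ) * (av t + β t)) * (∑ j, w j) := by
      rw [Finset.mul_sum]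
      exact Finset.sum_le_sum fun j _ => mul_le_mul_of_nonneg_right (hcolhi j) (hw j)
    have hBq : (av t - β t) - cv t - c t * ((n:ℝ) * (av t + β t))
        = (av t + β t - p t) * (θ t + φtx * E t) / d := by
      rw [hcdef, hcvdef]
      field_simp
      ring
    have hBnn : 0 ≤ (av t - β t) - cv t - c t * ((n:ℝ) * (av t + β t)) := by
      rw [hBq]
      exact div_nonneg (mul_nonneg (by linarith) hG.le) hd.le
    have hqG : q * (θ t + φtx * E t) = d * (c t * (∑ j, w j) - ε * ρ t) := by
      have h1 : q = c t * ((∑ j, w j) + (n:ℝ) * q) - ε * ρ t := by rw [← hSW]; exact hqdef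
      linear_combination q * (hGd t) + d * h1
    have hnumt : num t
        = (n:ℝ) * (av t + β t) - c t * ((n:ℝ) * ((n:ℝ) * (av t - β t))) - (n:ℝ) * cv t := by
      rw [hnumdef]
    have hZlo : (n:ℝ) * ((av t - β t) - cv t - c t * ((n:ℝ) * (av t + β t)))
        ≤ (∑ j, A x t i₀ j) - c t * (∑ i : Fin n, ∑ j, A x t i j) - (n:ℝ) * cv t := by
      have h1 : c t * (∑ i : Fin n, ∑ j, A x t i j)
          ≤ c t * ((n:ℝ) * ((n:ℝ) * (av t + β t))) := mul_le_mul_of_nonneg_left hThi hcnn'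
      linarith [hσlo]
    have hZhi : (∑ j, A x t i₀ j) - c t * (∑ i : Fin n, ∑ j, A x t i j) - (n:ℝ) * cv t
        ≤ num t := by
      have h1 : c t * ((n:ℝ) * ((n:ℝ) * (av t - β t)))
          ≤ c t * (∑ i : Fin n, ∑ j, A x t i j) := mul_le_mul_of_nonneg_left hTlo hcnn'
      rw [hnumt]
      linarith [hσhi]
    have hKfG : Kf t * (θ t + φtx * E t) = (θ t + φtx * E t) + max 0 (num t) * d := by
      rw [hKfdef]
      field_simp
    -- the product with G := θ t + φtx * E t is positive
    have e3 : (q * ((∑ j, A x t i₀ j) - c t * (∑ i : Fin n, ∑ j, A x t i j) - (n:ℝ) * cv t))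
          * (θ t + φtx * E t)
        = d * (c t * (∑ j, w j) - ε * ρ t)
          * ((∑ j, A x t i₀ j) - c t * (∑ i : Fin n, ∑ j, A x t i j) - (n:ℝ) * cv t) := by
      linear_combination
        ((∑ j, A x t i₀ j) - c t * (∑ i : Fin n, ∑ j, A x t i j) - (n:ℝ) * cv t) * hqG
    have m1 : c t * (∑ j, w j)
          * ((n:ℝ) * ((av t - β t) - cv t - c t * ((n:ℝ) * (av t + β t))))
        ≤ c t * (∑ j, w j)
          * ((∑ j, A x t i₀ j) - c t * (∑ i : Fin n, ∑ j, A x t i j) - (n:ℝ) * cv t) :=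
      mul_le_mul_of_nonneg_left hZlo (mul_nonneg hcnn' hWnn)
    have m2 : ε * ρ t * ((∑ j, A x t i₀ j) - c t * (∑ i : Fin n, ∑ j, A x t i j)
          - (n:ℝ) * cv t)
        ≤ ε * ρ t * num t :=
      mul_le_mul_of_nonneg_left hZhi (by positivity)
    have s1 : d * (c t * (∑ j, w j)
            * ((n:ℝ) * ((av t - β t) - cv t - c t * ((n:ℝ) * (av t + β t))))
          - ε * ρ t * num t)
        ≤ (q * ((∑ j, A x t i₀ j) - c t * (∑ i : Fin n, ∑ j, A x t i j) - (n:ℝ) * cv t))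
          * (θ t + φtx * E t) := by
      rw [e3]
      have h10 : c t * (∑ j, w j)
            * ((n:ℝ) * ((av t - β t) - cv t - c t * ((n:ℝ) * (av t + β t))))
            - ε * ρ t * num t
          ≤ c t * (∑ j, w j)
            * ((∑ j, A x t i₀ j) - c t * (∑ i : Fin n, ∑ j, A x t i j) - (n:ℝ) * cv t)
            - ε * ρ t * ((∑ j, A x t i₀ j) - c t * (∑ i : Fin n, ∑ j, A x t i j)
              - (n:ℝ) * cv t) := by linarith
      calc d * (c t * (∑ j, w j)
            * ((n:ℝ) * ((av t - β t) - cv t - c t * ((n:ℝ) * (av t + β t))))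
            - ε * ρ t * num t)
          ≤ d * (c t * (∑ j, w j)
            * ((∑ j, A x t i₀ j) - c t * (∑ i : Fin n, ∑ j, A x t i j) - (n:ℝ) * cv t)
            - ε * ρ t * ((∑ j, A x t i₀ j) - c t * (∑ i : Fin n, ∑ j, A x t i j)
              - (n:ℝ) * cv t)) := mul_le_mul_of_nonneg_left h10 hd.le
      _ = d * (c t * (∑ j, w j) - ε * ρ t)
            * ((∑ j, A x t i₀ j) - c t * (∑ i : Fin n, ∑ j, A x t i j) - (n:ℝ) * cv t) := by
            ring
    have s2 : 0 ≤ (∑ j, w j) * ((av t - β t) - cv t - c t * ((n:ℝ) * (av t + β t)))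
        * (θ t + φtx * E t) :=
      mul_nonneg (mul_nonneg hWnn hBnn) hG.le
    have s3 : 0 ≤ d * (c t * (∑ j, w j) * ((n:ℝ) * ((av t - β t) - cv t
        - c t * ((n:ℝ) * (av t + β t))))) :=
      mul_nonneg hd.le (mul_nonneg (mul_nonneg hcnn' hWnn) (mul_nonneg hn'.le hBnn))
    have s4 : ε * ρ t * (num t * d) ≤ ε * ρ t * (max 0 (num t) * d) :=
      mul_le_mul_of_nonneg_left
        (mul_le_mul_of_nonneg_right (le_max_right 0 (num t)) hd.le) (by positivity)
    have e4 : ε * ρ t * (Kf t * (θ t + φtx * E t))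
        = ε * ρ t * (θ t + φtx * E t) + ε * ρ t * (max 0 (num t) * d) := by
      rw [hKfG]; ring
    have hεG : 0 < ε * ρ t * (θ t + φtx * E t) := mul_pos (mul_pos hε hρt) hG
    -- the lower-bound quantity is positive
    have hX0G : 0 < (((av t - β t) * (∑ j, w j) + q * (∑ j, A x t i₀ j))
        - (cv t * ((∑ j, w j) + (n:ℝ) * q)
          + c t * (((n:ℝ) * (av t + β t)) * (∑ j, w j)
            + q * (∑ i : Fin n, ∑ j, A x t i j)))
        + ε * (Kf t * ρ t)) * (θ t + φtx * E t) := by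
      have e2 : (((av t - β t) * (∑ j, w j) + q * (∑ j, A x t i₀ j))
          - (cv t * ((∑ j, w j) + (n:ℝ) * q)
            + c t * (((n:ℝ) * (av t + β t)) * (∑ j, w j)
              + q * (∑ i : Fin n, ∑ j, A x t i j)))
          + ε * (Kf t * ρ t)) * (θ t + φtx * E t)
          = (∑ j, w j) * ((av t - β t) - cv t - c t * ((n:ℝ) * (av t + β t)))
              * (θ t + φtx * E t)
            + (q * ((∑ j, A x t i₀ j) - c t * (∑ i : Fin n, ∑ j, A x t i j)
                - (n:ℝ) * cv t)) * (θ t + φtx * E t)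
            + ε * ρ t * (Kf t * (θ t + φtx * E t)) := by ring
      rw [e2, e4]
      linarith [s1, s2, s3, s4, hεG]
    have hX0 : 0 < ((av t - β t) * (∑ j, w j) + q * (∑ j, A x t i₀ j))
        - (cv t * ((∑ j, w j) + (n:ℝ) * q)
          + c t * (((n:ℝ) * (av t + β t)) * (∑ j, w j)
            + q * (∑ i : Fin n, ∑ j, A x t i j)))
        + ε * (Kf t * ρ t) := by
      by_contra hX
      push_neg at hX
      have h11 := mul_nonneg (neg_nonneg.mpr hX) hG.le
      linarith [hX0G]
    rw [e_mv, e_SP, hSW]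
    have h2 : c t * (∑ j, (∑ i, A x t i j) * w j)
        ≤ c t * (((n:ℝ) * (av t + β t)) * (∑ j, w j)) :=
      mul_le_mul_of_nonneg_left b2 hcnn'
    linarith [b1, h2, hX0]
  -- positivity of the perturbed functions via a first-exit-time argument
  have claim : ∀ ε, 0 < ε → ∀ t, tx ≤ t → ∀ i : Fin n, 0 < y t i - c t * S t + ε * ρ t := by
    intro ε hε
    by_contra hcon
    push_neg at hcon
    obtain ⟨t, ht, i, hle⟩ := hcon
    have hconth : ∀ i : Fin n, Continuous (fun u => y u i - c u * S u + ε * ρ u) := fun i =>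
      ((hycont i).sub (hccont.mul hScont)).add (continuous_const.mul hρcont)
    set Bad : Set ℝ := {s : ℝ | tx ≤ s ∧ ∃ i : Fin n, y s i - c s * S s + ε * ρ s ≤ 0}
      with hBadDef
    have hBadne : Bad.Nonempty := ⟨t, ht, i, hle⟩
    have hBadbdd : BddBelow Bad := ⟨tx, fun s hs => hs.1⟩
    have hBadclosed : IsClosed Bad := by
      have hBadeq : Bad = Set.Ici tx ∩ ⋃ i : Fin n, {s | y s i - c s * S s + ε * ρ s ≤ 0} := by
        ext s
        simp [hBadDef, Set.mem_iUnion]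
      rw [hBadeq]
      exact isClosed_Ici.inter (isClosed_iUnion_of_finite fun i =>
        isClosed_le (hconth i) continuous_const)
    set t₂ := sInf Bad with ht₂def
    have ht₂Bad : t₂ ∈ Bad := hBadclosed.csInf_mem hBadne hBadbdd
    have ht₂ : tx ≤ t₂ := ht₂Bad.1
    have htxnot : tx ∉ Bad := by
      rintro ⟨-, i, hi⟩
      have hyz : y tx i = z i := by rw [hydef]; exact congrFun (hΨ0 x tx z) i
      rw [hyz, hctx, hρtx] at hi
      have := hz i
      nlinarith
    have htxlt : tx < t₂ := lt_of_le_of_ne ht₂ fun h => htxnot (h ▸ ht₂Bad)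
    have hbefore : ∀ s, tx ≤ s → s < t₂ → ∀ j : Fin n, 0 < y s j - c s * S s + ε * ρ s := by
      intro s hs1 hs2 j
      by_contra hnp
      push_neg at hnp
      exact absurd (csInf_le hBadbdd ⟨hs1, j, hnp⟩) (not_le.mpr hs2)
    have hge0 : ∀ j : Fin n, 0 ≤ y t₂ j - c t₂ * S t₂ + ε * ρ t₂ := by
      intro j
      have htend : Filter.Tendsto (fun u => y u j - c u * S u + ε * ρ u)
          (nhdsWithin t₂ (Set.Iio t₂)) (nhds (y t₂ j - c t₂ * S t₂ + ε * ρ t₂)) :=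
        ((hconth j).tendsto t₂).mono_left nhdsWithin_le_nhds
      refine ge_of_tendsto htend ?_
      filter_upwards [Ioo_mem_nhdsLT htxlt] with s hs
      exact (hbefore s hs.1.le hs.2 j).le
    obtain ⟨i₀, hi₀⟩ := ht₂Bad.2
    have hzero : y t₂ i₀ - c t₂ * S t₂ + ε * ρ t₂ = 0 := le_antisymm hi₀ (hge0 i₀)
    have hD := key ε hε t₂ ht₂ i₀ hge0
    have hder : HasDerivAt (fun u => y u i₀ - c u * S u + ε * ρ u)
        ((A x t₂ *ᵥ y t₂) i₀ - (cv t₂ * S t₂ + c t₂ * (∑ i, (A x t₂ *ᵥ y t₂) i))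
          + ε * (Kf t₂ * ρ t₂)) t₂ :=
      ((hyi i₀ t₂).sub ((hc t₂).mul (hSder t₂))).add ((hρ t₂).const_mul ε)
    rw [hasDerivAt_iff_tendsto_slope] at hder
    have hev : ∀ᶠ s in nhdsWithin t₂ (Set.Iio t₂),
        0 < slope (fun u => y u i₀ - c u * S u + ε * ρ u) t₂ s := by
      have h1 := hder.eventually (eventually_gt_nhds hD)
      exact h1.filter_mono (nhdsWithin_mono t₂ fun s hs => ne_of_lt hs)
    have hioo : ∀ᶠ s in nhdsWithin t₂ (Set.Iio t₂), s ∈ Set.Ioo tx t₂ :=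
      Ioo_mem_nhdsLT htxlt
    obtain ⟨s, hs_pos, hs_mem⟩ := (hev.and hioo).exists
    rw [slope_def_field, hzero, sub_zero] at hs_pos
    have hfs := hbefore s hs_mem.1.le hs_mem.2 i₀
    have hsneg : s - t₂ < 0 := by linarith [hs_mem.2]
    have hcontra : (y s i₀ - c s * S s + ε * ρ s) / (s - t₂) < 0 :=
      div_neg_of_pos_of_neg hfs hsneg
    linarith
  -- pass to the limit ε → 0
  have hyge : ∀ t, tx ≤ t → ∀ i : Fin n, c t * S t ≤ y t i := by
    intro t ht i
    by_contra hlt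
    push_neg at hlt
    have hρt := hρpos t
    have hεpos : 0 < (c t * S t - y t i) / (2 * ρ t) := div_pos (by linarith) (by linarith)
    have h1 := claim _ hεpos t ht i
    have h2 : (c t * S t - y t i) / (2 * ρ t) * ρ t = (c t * S t - y t i) / 2 := by
      field_simp
    rw [h2] at h1
    linarith
  have hSnn : ∀ t, tx ≤ t → 0 ≤ S t := by
    intro t ht
    have h2 : ∑ _i : Fin n, (c t * S t) ≤ ∑ i, y t i := Finset.sum_le_sum fun i _ => hyge t ht i
    rw [Finset.sum_const, Finset.card_univ, Fintype.card_fin, nsmul_eq_mul] at h2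
    have h1 : (n:ℝ) * (c t * S t) ≤ S t := by
      calc (n:ℝ) * (c t * S t) ≤ ∑ i, y t i := h2
      _ = S t := by rw [hSdef]
    have h5 : 0 < d * (1 - (n:ℝ) * c t) := by rw [← hGd t]; exact hGpos t
    have h4 : 0 < 1 - (n:ℝ) * c t := by
      rcases lt_trichotomy (1 - (n:ℝ) * c t) 0 with h | h | h
      · have h7 := mul_neg_of_pos_of_neg hd h
        linarith
      · rw [h, mul_zero] at h5
        exact absurd h5 (lt_irrefl 0)
      · exact h
    by_contra hS
    push_neg at hS
    have h6 := mul_neg_of_neg_of_pos hS h4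
    linarith [h6, h1]
  intro i
  have h1 := hyge t1 ht1 i
  have h0 : 0 ≤ c t1 * S t1 := mul_nonneg (hcnn t1 ht1) (hSnn t1 ht1)
  have h3 : (0:ℝ) ≤ y t1 i := by linarith
  rw [hydef] at h3
  exact h3
end

section
/- For the Winfree model ẋᵢ = ωᵢ − κσ(x)R(xᵢ) with σ(x) = (1/n)Σⱼ P(xⱼ), if ωᵢ ∈ (1−γ, 1+γ), |xᵢ − xⱼ| < D for all i,j, P and R are C¹ with ‖P'‖∞‖R‖∞ ≤ C̃/2, and 1 − κP(xᵢ)R(xᵢ) ≥ 1 − κ/κ*, then for each i: 1 − γ − C̃κD − κ/κ* < ωᵢ − κσ(x)R(xᵢ) < 1 + γ + κC̃. -/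
open scoped BigOperators

/-- MVT bound: `|(P a − P b) R t| ≤ (C̃/2)|a − b|`. -/
lemma key_mvt (P R : ℝ → ℝ) (hP : ContDiff ℝ 1 P) (Ct : ℝ)
    (h : ∀ s t, |deriv P s| * |R t| ≤ Ct / 2) :
    ∀ a b t, |(P a - P b) * R t| ≤ Ct / 2 * |a - b| := by
  intro a b t
  have hCt : 0 ≤ Ct / 2 := le_trans (by positivity) (h a t)
  by_cases hRt : R t = 0
  · simp [hRt]; positivity
  · have hR0 : 0 < |R t| := abs_pos.mpr hRt
    have hbound : ∀ s ∈ (Set.univ : Set ℝ), ‖deriv P s‖ ≤ Ct / 2 / |R t| := by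
      intro s _
      rw [Real.norm_eq_abs, le_div_iff₀ hR0]
      exact h s t
    have hdiff : ∀ s ∈ (Set.univ : Set ℝ), HasDerivWithinAt P (deriv P s) Set.univ s := by
      intro s _
      exact ((hP.differentiable one_ne_zero s).hasDerivAt).hasDerivWithinAt
    have := Convex.norm_image_sub_le_of_norm_hasDerivWithin_le hdiff hbound
      convex_univ (Set.mem_univ b) (Set.mem_univ a)
    rw [Real.norm_eq_abs, Real.norm_eq_abs] at this
    rw [abs_mul]
    calc |P a - P b| * |R t| ≤ (Ct / 2 / |R t| * |a - b|) * |R t| :=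
          mul_le_mul_of_nonneg_right this (abs_nonneg _)
      _ = Ct / 2 * |a - b| := by field_simp

/-- bounds on the velocities of the Winfree model,
`1 − γ − C̃κD − κ/κ* < ωᵢ − κσ(x)R(xᵢ) < 1 + γ + κC̃`. -/
theorem stmt_12 (n : ℕ) (hn : 0 < n)
    (P R : ℝ → ℝ) (hP : ContDiff ℝ 1 P) (hR : ContDiff ℝ 1 R)
    (γ κ D Ct κstar : ℝ) (hγ : 0 < γ) (hκ : 0 < κ) (hD : 0 < D) (hCt : 0 ≤ Ct)
    (ω : Fin n → ℝ) (hω : ∀ i, ω i ∈ Set.Ioo (1 - γ) (1 + γ))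
    (x : Fin n → ℝ) (hx : ∀ i j, |x i - x j| < D)
    (hP'R : ∀ s t, |deriv P s| * |R t| ≤ Ct / 2)
    (hPR : ∀ s t, |P s| * |R t| ≤ Ct / 2)
    (hlock : ∀ i, 1 - κ / κstar ≤ 1 - κ * P (x i) * R (x i)) :
    ∀ i, 1 - γ - Ct * κ * D - κ / κstar <
        ω i - κ * ((1 / (n : ℝ)) * ∑ j, P (x j)) * R (x i) ∧
      ω i - κ * ((1 / (n : ℝ)) * ∑ j, P (x j)) * R (x i) < 1 + γ + κ * Ct := by
  intro i
  have hn' : (0 : ℝ) < n := Nat.cast_pos.mpr hn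
  obtain ⟨hω1, hω2⟩ := hω i
  -- sum decomposition
  have hsum : ∑ j, (P (x i) - P (x j)) * R (x i)
      = (n : ℝ) * (P (x i) * R (x i)) - (∑ j, P (x j)) * R (x i) := by
    have heq : ∀ j : Fin n, (P (x i) - P (x j)) * R (x i)
        = P (x i) * R (x i) - P (x j) * R (x i) := fun j => by ring
    simp_rw [heq, Finset.sum_sub_distrib, Finset.sum_const, Finset.card_univ,
      Fintype.card_fin, nsmul_eq_mul, Finset.sum_mul]
  -- bound on correction term
  have hT : |(1 / (n : ℝ)) * ∑ j, (P (x i) - P (x j)) * R (x i)| ≤ Ct / 2 * D := by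
    rw [abs_mul]
    have h1 : |∑ j, (P (x i) - P (x j)) * R (x i)| ≤ (n : ℝ) * (Ct / 2 * D) := by
      calc |∑ j, (P (x i) - P (x j)) * R (x i)| ≤ ∑ j, |(P (x i) - P (x j)) * R (x i)| :=
            Finset.abs_sum_le_sum_abs _ _
        _ ≤ ∑ _j : Fin n, Ct / 2 * D := by
            apply Finset.sum_le_sum
            intro j _
            have := key_mvt P R hP Ct hP'R (x i) (x j) (x i)
            have hCt2 : 0 ≤ Ct / 2 := le_trans (by positivity) (hP'R 0 0)
            calc |(P (x i) - P (x j)) * R (x i)| ≤ Ct / 2 * |x i - x j| := this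
              _ ≤ Ct / 2 * D := mul_le_mul_of_nonneg_left (le_of_lt (hx i j)) hCt2
        _ = (n : ℝ) * (Ct / 2 * D) := by simp [Finset.sum_const, mul_comm]
    have : |(1 : ℝ) / n| = 1 / n := abs_of_pos (by positivity)
    rw [this]
    calc (1 / (n : ℝ)) * |∑ j, (P (x i) - P (x j)) * R (x i)|
        ≤ (1 / (n : ℝ)) * ((n : ℝ) * (Ct / 2 * D)) :=
          mul_le_mul_of_nonneg_left h1 (by positivity)
      _ = Ct / 2 * D := by field_simp
  -- bound on full coupling term
  have hSR : |(1 / (n : ℝ)) * (∑ j, P (x j)) * R (x i)| ≤ Ct / 2 := by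
    have h1 : |(∑ j, P (x j)) * R (x i)| ≤ (n : ℝ) * (Ct / 2) := by
      calc |(∑ j, P (x j)) * R (x i)| = |∑ j, P (x j) * R (x i)| := by rw [Finset.sum_mul]
        _ ≤ ∑ j, |P (x j) * R (x i)| := Finset.abs_sum_le_sum_abs _ _
        _ ≤ ∑ _j : Fin n, Ct / 2 := by
            apply Finset.sum_le_sum
            intro j _
            rw [abs_mul]
            exact hPR (x j) (x i)
        _ = (n : ℝ) * (Ct / 2) := by simp [Finset.sum_const, mul_comm]
    rw [mul_assoc, abs_mul, abs_of_pos (show (0:ℝ) < 1 / n by positivity)]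
    calc (1 / (n : ℝ)) * |(∑ j, P (x j)) * R (x i)| ≤ (1 / (n : ℝ)) * ((n : ℝ) * (Ct / 2)) :=
          mul_le_mul_of_nonneg_left h1 (by positivity)
      _ = Ct / 2 := by field_simp
  -- decomposition identity
  have hdecomp : (1 / (n : ℝ)) * (∑ j, P (x j)) * R (x i)
      = P (x i) * R (x i) - (1 / (n : ℝ)) * ∑ j, (P (x i) - P (x j)) * R (x i) := by
    rw [hsum]
    field_simp
    ring
  have hlocki := hlock i
  obtain ⟨hT1, hT2⟩ := abs_le.mp hT
  obtain ⟨hS1, hS2⟩ := abs_le.mp hSR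
  constructor
  · -- lower bound
    have : κ * ((1 / (n : ℝ)) * ∑ j, P (x j)) * R (x i)
        = κ * (P (x i) * R (x i)) - κ * ((1 / (n : ℝ)) * ∑ j, (P (x i) - P (x j)) * R (x i)) := by
      have := hdecomp
      nlinarith [hdecomp]
    nlinarith [mul_le_mul_of_nonneg_left hT2 (le_of_lt hκ),
      mul_le_mul_of_nonneg_left hT1 (le_of_lt hκ)]
  · nlinarith [mul_le_mul_of_nonneg_left hS1 (le_of_lt hκ)]
end
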